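/- With â as above and c(t) = Σ_{n≥0}[1_{[t_n,s_n)}(t) + 6·1_{[s_n,t_{n+1})}(t)], the value Y²(t_n) := ∫_{t_n}^1 c(s)·â(s)·Y(s) ds equals −2^{-(2n+5)} for every n, where Y(s) := ∫_s^1 â(r) dr. -/

import Mathlib

open MeasureTheory Set

noncomputable def tn (n : ℕ) : ℝ := 1 - 1 / 2 ^ n
noncomputable def sn (n : ℕ) : ℝ := (tn n + 3 * tn (n + 1)) / 4
noncomputable def c (x : ℝ) : ℝ :=
  ∑' n : ℕ, ((Ico (tn n) (sn n)).indicator (fun _ => (1 : ℝ)) x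
    + 6 * (Ico (sn n) (tn (n + 1))).indicator (fun _ => (1 : ℝ)) x)
noncomputable def ahat (x : ℝ) : ℝ :=
  ∑' n : ℕ, ((Ico (tn n) (sn n)).indicator (fun _ => (1 : ℝ)) x
    - (Ico (sn n) (tn (n + 1))).indicator (fun _ => (1 : ℝ)) x)

noncomputable def am (m : ℕ) : ℝ := 1 / 2 ^ (m + 3)

lemma am_pos (m : ℕ) : 0 < am m := by unfold am; positivity

lemma sn_eq (m : ℕ) : sn m = tn m + 3 * am m := by
  unfold sn tn am; rw [pow_succ, pow_add]; norm_num; ring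

lemma tn_succ_eq (m : ℕ) : tn (m+1) = tn m + 4 * am m := by
  unfold tn am; rw [pow_succ, pow_add]; norm_num; ring

lemma tn_lt_sn (m : ℕ) : tn m < sn m := by
  rw [sn_eq]; nlinarith [am_pos m]

lemma sn_lt_tn (m : ℕ) : sn m < tn (m+1) := by
  rw [sn_eq, tn_succ_eq]; nlinarith [am_pos m]

lemma tn_mono : StrictMono tn := by
  intro a b h
  unfold tn
  have : (1:ℝ)/2^b < 1/2^a := by
    apply one_div_lt_one_div_of_lt (by positivity)
    exact pow_lt_pow_right₀ (by norm_num) h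
  linarith

lemma tn_nonneg (m : ℕ) : 0 ≤ tn m := by
  unfold tn
  have : (1:ℝ)/2^m ≤ 1 := by
    rw [div_le_one (by positivity)]; exact one_le_pow₀ (by norm_num)
  linarith

lemma tn_lt_one (m : ℕ) : tn m < 1 := by
  unfold tn; have : (0:ℝ) < 1/2^m := by positivity
  linarith

lemma tn_zero : tn 0 = 0 := by unfold tn; norm_num

def A (m : ℕ) : Set ℝ := Ico (tn m) (sn m)
def B (m : ℕ) : Set ℝ := Ico (sn m) (tn (m+1))
def blk (m : ℕ) : Set ℝ := Ico (tn m) (tn (m+1))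

lemma A_union_B (m : ℕ) : A m ∪ B m = blk m :=
  Ico_union_Ico_eq_Ico (tn_lt_sn m).le (sn_lt_tn m).le

lemma A_subset (m : ℕ) : A m ⊆ blk m := by
  rw [← A_union_B]; exact subset_union_left

lemma B_subset (m : ℕ) : B m ⊆ blk m := by
  rw [← A_union_B]; exact subset_union_right

lemma blk_disj : Pairwise (Function.onFun Disjoint blk) := by
  intro k l hkl
  unfold Function.onFun blk
  rcases hkl.lt_or_gt with h | h
  · exact Set.Ico_disjoint_Ico.2 (le_trans (min_le_left _ _)
      (le_trans (tn_mono.monotone h) (le_max_right _ _)))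
  · exact Set.Ico_disjoint_Ico.2 (le_trans (min_le_right _ _)
      (le_trans (tn_mono.monotone h) (le_max_left _ _)))

lemma notMem_blk {x : ℝ} {m k : ℕ} (hx : x ∈ blk m) (hk : k ≠ m) : x ∉ blk k := by
  intro hxk
  exact (blk_disj hk).le_bot ⟨hxk, hx⟩

lemma iUnion_blk (n : ℕ) : (⋃ j, blk (n + j)) = Ico (tn n) 1 := by
  ext x
  simp only [mem_iUnion, blk, mem_Ico]
  constructor
  · rintro ⟨j, h1, h2⟩
    exact ⟨le_trans (tn_mono.monotone (Nat.le_add_right n j)) h1,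
      lt_of_lt_of_le h2 (tn_lt_one _).le⟩
  · rintro ⟨h1, h2⟩
    -- find K with x < tn K
    obtain ⟨K, hK⟩ : ∃ K : ℕ, x < tn (n + K) := by
      obtain ⟨K, hK⟩ := pow_unbounded_of_one_lt (1/(1-x)) (by norm_num : (1:ℝ) < 2)
      refine ⟨K, ?_⟩
      have h1x : (0:ℝ) < 1 - x := by linarith
      have : 1/(2:ℝ)^(n+K) < 1 - x := by
        rw [div_lt_iff₀ (by positivity)]
        have : 1/(1-x) < 2^(n+K) :=
          lt_of_lt_of_le hK (pow_le_pow_right₀ (by norm_num) (Nat.le_add_left K n))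
        calc (1:ℝ) = (1/(1-x)) * (1-x) := by field_simp
        _ < 2^(n+K) * (1-x) := by nlinarith
        _ = (1-x) * 2^(n+K) := by ring
      unfold tn; linarith
    -- least such K
    have hP : ∃ K, x < tn (n + K) := ⟨K, hK⟩
    classical
    have hj : x < tn (n + Nat.find hP) := Nat.find_spec hP
    have hj0 : Nat.find hP ≠ 0 := by
      intro h; rw [h] at hj; simp at hj; linarith
    obtain ⟨i, hie⟩ : ∃ i, Nat.find hP = i + 1 :=
      ⟨Nat.find hP - 1, (Nat.succ_pred_eq_of_pos (Nat.pos_of_ne_zero hj0)).symm⟩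
    have hi : ¬ x < tn (n + i) := Nat.find_min hP (by omega)
    rw [hie] at hj
    exact ⟨i, not_lt.1 hi, by rw [Nat.add_assoc]; exact hj⟩

lemma ahat_term (k : ℕ) (x : ℝ) :
    (Ico (tn k) (sn k)).indicator (fun _ => (1 : ℝ)) x
    - (Ico (sn k) (tn (k + 1))).indicator (fun _ => (1 : ℝ)) x
    = (A k).indicator (fun _ => (1 : ℝ)) x - (B k).indicator (fun _ => (1 : ℝ)) x := rfl

lemma c_term (k : ℕ) (x : ℝ) :
    (Ico (tn k) (sn k)).indicator (fun _ => (1 : ℝ)) x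
    + 6 * (Ico (sn k) (tn (k + 1))).indicator (fun _ => (1 : ℝ)) x
    = (A k).indicator (fun _ => (1 : ℝ)) x + 6 * (B k).indicator (fun _ => (1 : ℝ)) x := rfl

lemma term_zero_of_notMem_blk {x : ℝ} {k : ℕ} (h : x ∉ blk k) :
    (A k).indicator (fun _ => (1 : ℝ)) x = 0 ∧ (B k).indicator (fun _ => (1 : ℝ)) x = 0 :=
  ⟨indicator_of_notMem (fun hx => h (A_subset k hx)) _,
   indicator_of_notMem (fun hx => h (B_subset k hx)) _⟩

lemma ahat_of_mem_A {x : ℝ} {m : ℕ} (hx : x ∈ A m) : ahat x = 1 := by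
  unfold ahat
  rw [tsum_eq_single m]
  · rw [ahat_term, indicator_of_mem hx,
      indicator_of_notMem (fun hB => absurd (hB : x ∈ B m).1 (not_le.2 hx.2)) ]
    norm_num
  · intro k hk
    rw [ahat_term]
    obtain ⟨h1, h2⟩ := term_zero_of_notMem_blk (notMem_blk (A_subset m hx) hk)
    rw [h1, h2]; ring

lemma ahat_of_mem_B {x : ℝ} {m : ℕ} (hx : x ∈ B m) : ahat x = -1 := by
  unfold ahat
  rw [tsum_eq_single m]
  · rw [ahat_term, indicator_of_mem hx,
      indicator_of_notMem (fun hA => absurd (hA : x ∈ A m).2 (not_lt.2 hx.1))]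
    norm_num
  · intro k hk
    rw [ahat_term]
    obtain ⟨h1, h2⟩ := term_zero_of_notMem_blk (notMem_blk (B_subset m hx) hk)
    rw [h1, h2]; ring

lemma c_of_mem_A {x : ℝ} {m : ℕ} (hx : x ∈ A m) : c x = 1 := by
  unfold c
  rw [tsum_eq_single m]
  · rw [c_term, indicator_of_mem hx,
      indicator_of_notMem (fun hB => absurd (hB : x ∈ B m).1 (not_le.2 hx.2))]
    norm_num
  · intro k hk
    rw [c_term]
    obtain ⟨h1, h2⟩ := term_zero_of_notMem_blk (notMem_blk (A_subset m hx) hk)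
    rw [h1, h2]; ring

lemma c_of_mem_B {x : ℝ} {m : ℕ} (hx : x ∈ B m) : c x = 6 := by
  unfold c
  rw [tsum_eq_single m]
  · rw [c_term, indicator_of_mem hx,
      indicator_of_notMem (fun hA => absurd (hA : x ∈ A m).2 (not_lt.2 hx.1))]
    norm_num
  · intro k hk
    rw [c_term]
    obtain ⟨h1, h2⟩ := term_zero_of_notMem_blk (notMem_blk (B_subset m hx) hk)
    rw [h1, h2]; ring

lemma notMem_any_blk {x : ℝ} (h : x ∉ Ico (tn 0) 1) (k : ℕ) : x ∉ blk k := by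
  intro hk
  exact h (by rw [← iUnion_blk 0]; exact mem_iUnion.2 ⟨k, by rwa [Nat.zero_add]⟩)

lemma ahat_of_out {x : ℝ} (h : x ∉ Ico (tn 0) 1) : ahat x = 0 := by
  unfold ahat
  rw [tsum_eq_single 0]
  · obtain ⟨h1, h2⟩ := term_zero_of_notMem_blk (notMem_any_blk h 0)
    rw [ahat_term, h1, h2]; ring
  · intro k _
    obtain ⟨h1, h2⟩ := term_zero_of_notMem_blk (notMem_any_blk h k)
    rw [ahat_term, h1, h2]; ring

lemma c_of_out {x : ℝ} (h : x ∉ Ico (tn 0) 1) : c x = 0 := by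
  unfold c
  rw [tsum_eq_single 0]
  · obtain ⟨h1, h2⟩ := term_zero_of_notMem_blk (notMem_any_blk h 0)
    rw [c_term, h1, h2]; ring
  · intro k _
    obtain ⟨h1, h2⟩ := term_zero_of_notMem_blk (notMem_any_blk h k)
    rw [c_term, h1, h2]; ring

-- trichotomy
lemma cases_x (x : ℝ) : (∃ m, x ∈ A m) ∨ (∃ m, x ∈ B m) ∨ x ∉ Ico (tn 0) 1 := by
  by_cases h : x ∈ Ico (tn 0) 1
  · rw [← iUnion_blk 0] at h
    obtain ⟨k, hk⟩ := mem_iUnion.1 h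
    rw [Nat.zero_add, ← A_union_B] at hk
    rcases hk with hk | hk
    · exact Or.inl ⟨k, hk⟩
    · exact Or.inr (Or.inl ⟨k, hk⟩)
  · exact Or.inr (Or.inr h)

-- global representations
lemma ahat_repr : ahat = fun x => (⋃ m, A m).indicator (fun _ => (1:ℝ)) x
    - (⋃ m, B m).indicator (fun _ => (1:ℝ)) x := by
  funext x
  have hABdisj : ∀ k l, x ∈ A k → x ∉ B l := by
    intro k l hA hB
    by_cases h : l = k
    · subst h; exact absurd hB.1 (not_le.2 hA.2)
    · exact notMem_blk (A_subset k hA) h (B_subset l hB)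
  rcases cases_x x with ⟨m, hm⟩ | ⟨m, hm⟩ | h
  · rw [ahat_of_mem_A hm, indicator_of_mem (mem_iUnion.2 ⟨m, hm⟩),
      indicator_of_notMem (by
        intro hB; obtain ⟨l, hl⟩ := mem_iUnion.1 hB; exact hABdisj m l hm hl)]
    norm_num
  · rw [ahat_of_mem_B hm, indicator_of_mem (mem_iUnion.2 ⟨m, hm⟩),
      indicator_of_notMem (by
        intro hA; obtain ⟨l, hl⟩ := mem_iUnion.1 hA; exact hABdisj l m hl hm)]
    norm_num
  · rw [ahat_of_out h,
      indicator_of_notMem (by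
        intro hA; obtain ⟨l, hl⟩ := mem_iUnion.1 hA
        exact notMem_any_blk h l (A_subset l hl)),
      indicator_of_notMem (by
        intro hB; obtain ⟨l, hl⟩ := mem_iUnion.1 hB
        exact notMem_any_blk h l (B_subset l hl))]
    norm_num

lemma c_repr : c = fun x => (⋃ m, A m).indicator (fun _ => (1:ℝ)) x
    + 6 * (⋃ m, B m).indicator (fun _ => (1:ℝ)) x := by
  funext x
  have hABdisj : ∀ k l, x ∈ A k → x ∉ B l := by
    intro k l hA hB
    by_cases h : l = k
    · subst h; exact absurd hB.1 (not_le.2 hA.2)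
    · exact notMem_blk (A_subset k hA) h (B_subset l hB)
  rcases cases_x x with ⟨m, hm⟩ | ⟨m, hm⟩ | h
  · rw [c_of_mem_A hm, indicator_of_mem (mem_iUnion.2 ⟨m, hm⟩),
      indicator_of_notMem (by
        intro hB; obtain ⟨l, hl⟩ := mem_iUnion.1 hB; exact hABdisj m l hm hl)]
    norm_num
  · rw [c_of_mem_B hm, indicator_of_mem (mem_iUnion.2 ⟨m, hm⟩),
      indicator_of_notMem (by
        intro hA; obtain ⟨l, hl⟩ := mem_iUnion.1 hA; exact hABdisj l m hl hm)]
    norm_num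
  · rw [c_of_out h,
      indicator_of_notMem (by
        intro hA; obtain ⟨l, hl⟩ := mem_iUnion.1 hA
        exact notMem_any_blk h l (A_subset l hl)),
      indicator_of_notMem (by
        intro hB; obtain ⟨l, hl⟩ := mem_iUnion.1 hB
        exact notMem_any_blk h l (B_subset l hl))]
    norm_num

lemma measurable_ahat : Measurable ahat := by
  rw [ahat_repr]
  exact ((measurable_const.indicator (MeasurableSet.iUnion (fun m => measurableSet_Ico))).sub
    (measurable_const.indicator (MeasurableSet.iUnion (fun m => measurableSet_Ico))))

lemma measurable_c : Measurable c := by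
  rw [c_repr]
  exact ((measurable_const.indicator (MeasurableSet.iUnion (fun m => measurableSet_Ico))).add
    ((measurable_const.mul (measurable_const.indicator (MeasurableSet.iUnion (fun m => measurableSet_Ico))))))

lemma abs_ahat_le (x : ℝ) : |ahat x| ≤ 1 := by
  rcases cases_x x with ⟨m, hm⟩ | ⟨m, hm⟩ | h
  · rw [ahat_of_mem_A hm]; norm_num
  · rw [ahat_of_mem_B hm]; norm_num
  · rw [ahat_of_out h]; norm_num

lemma abs_c_le (x : ℝ) : |c x| ≤ 6 := by
  rcases cases_x x with ⟨m, hm⟩ | ⟨m, hm⟩ | h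
  · rw [c_of_mem_A hm]; norm_num
  · rw [c_of_mem_B hm]; norm_num
  · rw [c_of_out h]; norm_num

-- generic: bounded measurable on finite-measure set is integrable
lemma bdd_integrableOn {g : ℝ → ℝ} (hg : Measurable g) {C : ℝ}
    (h : ∀ x, |g x| ≤ C) {s : Set ℝ} (hs : volume s < ⊤) : IntegrableOn g s := by
  refine Integrable.mono' (g := fun _ => C) (integrableOn_const hs.ne)
    hg.aestronglyMeasurable ?_
  exact Filter.Eventually.of_forall fun x => h x

lemma ahat_ii (a b : ℝ) : IntervalIntegrable ahat volume a b := by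
  rw [intervalIntegrable_iff]
  exact bdd_integrableOn measurable_ahat abs_ahat_le
    (lt_of_le_of_lt (measure_mono Set.uIoc_subset_uIcc) measure_Icc_lt_top)

lemma intInt_const {g : ℝ → ℝ} {a b C : ℝ} (hab : a ≤ b) (h : ∀ x ∈ Ioo a b, g x = C) :
    ∫ x in a..b, g x = C * (b - a) := by
  rw [intervalIntegral.integral_of_le hab, integral_Ioc_eq_integral_Ioo,
    setIntegral_congr_fun measurableSet_Ioo h, setIntegral_const, measureReal_def, Real.volume_Ioo,
    ENNReal.toReal_ofReal (by linarith), smul_eq_mul]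
  ring

lemma vol_Ico {a b : ℝ} (hab : a ≤ b) : (volume (Ico a b)).toReal = b - a := by
  rw [Real.volume_Ico, ENNReal.toReal_ofReal (by linarith)]

lemma measurableSet_A (m : ℕ) : MeasurableSet (A m) := measurableSet_Ico
lemma measurableSet_B (m : ℕ) : MeasurableSet (B m) := measurableSet_Ico
lemma measurableSet_blk (m : ℕ) : MeasurableSet (blk m) := measurableSet_Ico

lemma setInt_ahat_A (m : ℕ) : ∫ x in A m, ahat x = 3 * am m := by
  unfold A
  rw [setIntegral_congr_fun measurableSet_Ico (fun x hx => ahat_of_mem_A hx),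
    setIntegral_const, measureReal_def, vol_Ico (tn_lt_sn m).le, smul_eq_mul, sn_eq]
  ring

lemma setInt_ahat_B (m : ℕ) : ∫ x in B m, ahat x = -(am m) := by
  unfold B
  rw [setIntegral_congr_fun measurableSet_Ico (fun x hx => ahat_of_mem_B hx),
    setIntegral_const, measureReal_def, vol_Ico (sn_lt_tn m).le, smul_eq_mul, tn_succ_eq, sn_eq]
  ring

lemma AB_disj (m : ℕ) : Disjoint (A m) (B m) :=
  Set.Ico_disjoint_Ico.2 (le_trans (min_le_left _ _) (le_max_right _ _))

lemma ahat_intOn (s : Set ℝ) (hs : volume s < ⊤) : IntegrableOn ahat s :=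
  bdd_integrableOn measurable_ahat abs_ahat_le hs

lemma vol_blk_lt (m : ℕ) : volume (blk m) < ⊤ := measure_Ico_lt_top

lemma setInt_ahat_blk (m : ℕ) : ∫ x in blk m, ahat x = 2 * am m := by
  rw [← A_union_B, setIntegral_union (AB_disj m) (measurableSet_B m)
    (ahat_intOn _ measure_Ico_lt_top) (ahat_intOn _ measure_Ico_lt_top),
    setInt_ahat_A, setInt_ahat_B]
  ring

lemma am_geom (m : ℕ) (j : ℕ) : am (m + j) = am m * (1/2)^j := by
  unfold am
  rw [div_pow, one_pow]
  rw [show m + j + 3 = (m + 3) + j by ring, pow_add]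
  field_simp

lemma Y_tn (m : ℕ) : (∫ r in (tn m)..1, ahat r) = 4 * am m := by
  rw [intervalIntegral.integral_of_le (tn_lt_one m).le, integral_Ioc_eq_integral_Ioo,
    ← integral_Ico_eq_integral_Ioo, ← iUnion_blk m,
    integral_iUnion (s := fun j => blk (m + j)) (fun j => measurableSet_blk _)
      (fun k l hkl => blk_disj (by simpa using hkl))
      (by rw [iUnion_blk]; exact ahat_intOn _ measure_Ico_lt_top)]
  have h1 : ∀ j : ℕ, (∫ x in blk (m + j), ahat x) = (2 * am m) * (1/2)^j := by
    intro j; rw [setInt_ahat_blk, am_geom m j]; ring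
  rw [tsum_congr h1, tsum_mul_left, tsum_geometric_of_lt_one (by norm_num) (by norm_num)]
  norm_num; ring

lemma am_succ (m : ℕ) : am (m+1) = am m / 2 := by
  unfold am; rw [show m + 1 + 3 = (m+3)+1 by ring, pow_succ]; ring

lemma Y_A {m : ℕ} {s : ℝ} (hs : s ∈ A m) : (∫ r in s..1, ahat r) = sn m - s + am m := by
  obtain ⟨hs1, hs2⟩ := hs
  have h1 : (∫ r in s..(sn m), ahat r) = sn m - s := by
    rw [intInt_const hs2.le (fun x hx => ahat_of_mem_A ⟨le_trans hs1 hx.1.le, hx.2⟩)]; ring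
  have h2 : (∫ r in (sn m)..(tn (m+1)), ahat r) = -(am m) := by
    rw [intInt_const (sn_lt_tn m).le (fun x hx => ahat_of_mem_B ⟨hx.1.le, hx.2⟩)]
    rw [tn_succ_eq, sn_eq]; ring
  have h3 := Y_tn (m+1)
  rw [am_succ] at h3
  rw [← intervalIntegral.integral_add_adjacent_intervals (ahat_ii s (tn (m+1))) (ahat_ii (tn (m+1)) 1),
    ← intervalIntegral.integral_add_adjacent_intervals (ahat_ii s (sn m)) (ahat_ii (sn m) (tn (m+1))),
    h1, h2, h3]
  ring

lemma Y_B {m : ℕ} {s : ℝ} (hs : s ∈ B m) : (∫ r in s..1, ahat r) = 2 * am m - (tn (m+1) - s) := by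
  obtain ⟨hs1, hs2⟩ := hs
  have h2 : (∫ r in s..(tn (m+1)), ahat r) = -(tn (m+1) - s) := by
    rw [intInt_const hs2.le (fun x hx => ahat_of_mem_B ⟨le_trans hs1 hx.1.le, hx.2⟩)]; ring
  have h3 := Y_tn (m+1)
  rw [am_succ] at h3
  rw [← intervalIntegral.integral_add_adjacent_intervals (ahat_ii s (tn (m+1))) (ahat_ii (tn (m+1)) 1),
    h2, h3]
  ring

lemma lin_int (a b C k : ℝ) : ∫ x in a..b, k * (C - x) = k * (C*(b-a) - (b^2-a^2)/2) := by
  rw [intervalIntegral.integral_const_mul,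
    intervalIntegral.integral_sub intervalIntegrable_const intervalIntegral.intervalIntegrable_id,
    integral_id, intervalIntegral.integral_const, smul_eq_mul]
  ring

lemma setInt_Ico_eq {g : ℝ → ℝ} {a b : ℝ} (hab : a ≤ b) :
    ∫ x in Ico a b, g x = ∫ x in a..b, g x := by
  rw [integral_Ico_eq_integral_Ioo, ← integral_Ioc_eq_integral_Ioo,
    ← intervalIntegral.integral_of_le hab]

lemma setInt_f_A (m : ℕ) :
    (∫ x in A m, c x * ahat x * ∫ r in x..1, ahat r) = (15/2) * (am m)^2 := by
  have hcong : EqOn (fun x => c x * ahat x * ∫ r in x..1, ahat r)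
      (fun x => 1 * ((tn m + 4 * am m) - x)) (A m) := by
    intro x hx
    simp only
    rw [c_of_mem_A hx, ahat_of_mem_A hx, Y_A hx, sn_eq]; ring
  rw [setIntegral_congr_fun (measurableSet_A m) hcong]
  unfold A
  rw [setInt_Ico_eq (tn_lt_sn m).le, lin_int, sn_eq]
  ring

lemma setInt_f_B (m : ℕ) :
    (∫ x in B m, c x * ahat x * ∫ r in x..1, ahat r) = -9 * (am m)^2 := by
  have hcong : EqOn (fun x => c x * ahat x * ∫ r in x..1, ahat r)
      (fun x => 6 * ((tn m + 2 * am m) - x)) (B m) := by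
    intro x hx
    simp only
    rw [c_of_mem_B hx, ahat_of_mem_B hx, Y_B hx, tn_succ_eq]; ring
  rw [setIntegral_congr_fun (measurableSet_B m) hcong]
  unfold B
  rw [setInt_Ico_eq (sn_lt_tn m).le, lin_int, sn_eq, tn_succ_eq]
  ring

lemma Y_cont : Continuous (fun s : ℝ => ∫ r in s..1, ahat r) := by
  have h := (intervalIntegral.continuous_primitive (fun a b => ahat_ii a b) 1).neg
  have e : (fun s : ℝ => ∫ r in s..1, ahat r) = (fun s => -∫ r in (1:ℝ)..s, ahat r) :=
    funext fun s => intervalIntegral.integral_symm (1 : ℝ) s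
  rw [e]; exact h

lemma blk_sub (m : ℕ) : blk m ⊆ Ico (0:ℝ) 1 := by
  intro x hx
  have : x ∈ ⋃ j, blk (0 + j) := mem_iUnion.2 ⟨m, by rwa [Nat.zero_add]⟩
  rw [iUnion_blk 0, tn_zero] at this
  exact this

lemma f_intOn {s : Set ℝ} (hsm : MeasurableSet s) (hs : s ⊆ Ico (0:ℝ) 1) :
    IntegrableOn (fun x => c x * ahat x * ∫ r in x..1, ahat r) s := by
  refine Integrable.mono' (g := fun _ => (6:ℝ))
    (integrableOn_const (lt_of_le_of_lt (measure_mono hs) measure_Ico_lt_top).ne)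
    (((measurable_c.mul measurable_ahat).mul Y_cont.measurable).aestronglyMeasurable) ?_
  rw [ae_restrict_iff' hsm]
  refine Filter.Eventually.of_forall fun x hx => ?_
  obtain ⟨hx0, hx1⟩ := hs hx
  have hY : |∫ r in x..1, ahat r| ≤ 1 := by
    have h := intervalIntegral.norm_integral_le_of_norm_le_const (C := 1) (f := ahat)
      (a := x) (b := 1) (fun y _ => by rw [Real.norm_eq_abs]; exact abs_ahat_le y)
    rw [Real.norm_eq_abs] at h
    calc |∫ r in x..1, ahat r| ≤ 1 * |1 - x| := h
    _ ≤ 1 := by rw [one_mul, abs_of_nonneg (by linarith)]; linarith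
  rw [Real.norm_eq_abs, abs_mul, abs_mul]
  calc |c x| * |ahat x| * |∫ r in x..1, ahat r| ≤ 6 * 1 * 1 := by
        apply mul_le_mul (mul_le_mul (abs_c_le x) (abs_ahat_le x) (abs_nonneg _) (by norm_num)) hY (abs_nonneg _) (by norm_num)
  _ = 6 := by norm_num

lemma setInt_f_blk (m : ℕ) :
    (∫ x in blk m, c x * ahat x * ∫ r in x..1, ahat r) = -(3/2) * (am m)^2 := by
  rw [← A_union_B, setIntegral_union (AB_disj m) (measurableSet_B m)
    (f_intOn (measurableSet_A m) (fun x hx => blk_sub m (A_subset m hx)))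
    (f_intOn (measurableSet_B m) (fun x hx => blk_sub m (B_subset m hx))),
    setInt_f_A, setInt_f_B]
  ring

theorem stmt7 (n : ℕ) :
    (∫ s in (tn n)..1, c s * ahat s * ∫ r in s..1, ahat r) = -(1 / 2 ^ (2 * n + 5)) := by
  rw [intervalIntegral.integral_of_le (tn_lt_one n).le, integral_Ioc_eq_integral_Ioo,
    ← integral_Ico_eq_integral_Ioo, ← iUnion_blk n,
    integral_iUnion (s := fun j => blk (n + j)) (fun j => measurableSet_blk _)
      (fun k l hkl => blk_disj (by simpa using hkl))
      (by rw [iUnion_blk]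
          refine f_intOn measurableSet_Ico (fun x hx => ?_)
          exact ⟨le_trans (tn_nonneg n) hx.1, hx.2⟩)]
  have h1 : ∀ j : ℕ, (∫ x in blk (n + j), c x * ahat x * ∫ r in x..1, ahat r)
      = (-(3/2) * (am n)^2) * (1/4)^j := by
    intro j
    have h4 : ((1:ℝ)/4)^j = ((1/2):ℝ)^j * ((1/2):ℝ)^j := by rw [← mul_pow]; norm_num
    rw [setInt_f_blk, am_geom n j, h4]; ring
  rw [tsum_congr h1, tsum_mul_left, tsum_geometric_of_lt_one (by norm_num) (by norm_num)]
  have ham : (am n)^2 = 1 / 2^(2*n+6) := by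
    unfold am
    rw [div_pow, one_pow, ← pow_mul]
    congr 1
    ring
  rw [ham, show (2:ℝ)^(2*n+6) = 2^(2*n+5) * 2 by rw [← pow_succ]]
  norm_num
  field_simp
  ring
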